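/- In U(sl₂ ⊗ A) acting on a vector v with (e ⊗ P)v = 0 and (h ⊗ P)v = 0 for all P in an ideal containing P₁,...,Pₙ, one has the identity (e⊗P)·(f⊗Q₁)···(f⊗Qₙ)·v = -Σ_{i≠j} (f ⊗ P·Q_i·Q_j) · Π_{k≠i,j}(f⊗Q_k) · v, where e, h, f is the standard basis of sl₂ and A is a commutative algebra. -/

import Mathlib

lemma H_prod_aux {k A V : Type*} [Field k] [CommRing A] [Algebra k A]
    [AddCommGroup V] [Module k V]
    (H F : A → Module.End k V)
    (hHF : ∀ P Q : A, ⁅H P, F Q⁆ = (-2 : ℤ) • F (P * Q))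
    (hFF : ∀ P Q : A, Commute (F P) (F Q))
    (I : Ideal A) (v : V) (hHv : ∀ P ∈ I, H P v = 0)
    {ι : Type*} [DecidableEq ι] (Q : ι → A) (R : A) (hR : R ∈ I)
    (s : Finset ι) :
    (H R * s.noncommProd (fun t => F (Q t)) (fun a _ b _ _ => hFF (Q a) (Q b))) v =
      ∑ i ∈ s, (-2 : ℤ) • ((F (R * Q i) *
        (s \ {i}).noncommProd (fun t => F (Q t)) (fun a _ b _ _ => hFF (Q a) (Q b))) v) := by
  classical
  induction s using Finset.induction_on with
  | empty => simp [Finset.noncommProd_empty _ (fun a _ b _ _ => hFF (Q a) (Q b)), hHv R hR]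
  | @insert a s ha ih =>
    have h1 : H R * F (Q a) = F (Q a) * H R + (-2 : ℤ) • F (R * Q a) := by
      have h0 := hHF R (Q a)
      rw [Ring.lie_def] at h0
      rw [← h0]; abel
    have expand : H R * ((insert a s).noncommProd (fun t => F (Q t))
        (fun a _ b _ _ => hFF (Q a) (Q b))) =
        F (Q a) * (H R * s.noncommProd (fun t => F (Q t)) (fun a _ b _ _ => hFF (Q a) (Q b)))
          + ((-2 : ℤ) • F (R * Q a)) * s.noncommProd (fun t => F (Q t))
              (fun a _ b _ _ => hFF (Q a) (Q b)) := by
      rw [Finset.noncommProd_insert_of_notMem _ _ _ (fun a _ b _ _ => hFF (Q a) (Q b)) ha, ← mul_assoc, h1, add_mul, mul_assoc]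
    rw [expand, Finset.sum_insert ha]
    have e1 : insert a s \ ({a} : Finset ι) = s := by
      rw [Finset.insert_sdiff_of_mem _ (Finset.mem_singleton_self a),
        Finset.sdiff_singleton_eq_erase, Finset.erase_eq_of_notMem ha]
    rw [e1]
    have e2 : ∀ i ∈ s, insert a s \ ({i} : Finset ι) = insert a (s \ {i}) := by
      intro i hi
      exact Finset.insert_sdiff_of_notMem _
        (by simp only [Finset.mem_singleton]; rintro rfl; exact ha hi)
    rw [Finset.sum_congr rfl (fun i hi => by
      rw [e2 i hi, Finset.noncommProd_insert_of_notMem _ _ _ (fun a _ b _ _ => hFF (Q a) (Q b))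
        (fun h => ha (Finset.mem_sdiff.mp h).1),
        ← mul_assoc, (hFF (R * Q i) (Q a)).eq, mul_assoc])]
    have key : ∀ i ∈ s, (-2 : ℤ) • ((F (Q a) * (F (R * Q i) *
          (s \ {i}).noncommProd (fun t => F (Q t)) (fun a _ b _ _ => hFF (Q a) (Q b)))) v)
        = F (Q a) ((-2 : ℤ) • ((F (R * Q i) *
          (s \ {i}).noncommProd (fun t => F (Q t)) (fun a _ b _ _ => hFF (Q a) (Q b))) v)) := by
      intro i _
      rw [map_zsmul]
      rfl
    rw [Finset.sum_congr rfl key, ← map_sum, ← ih]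
    simp only [LinearMap.add_apply, Module.End.mul_apply, LinearMap.smul_apply]
    rw [add_comm]

lemma E_prod_aux {k A V : Type*} [Field k] [CommRing A] [Algebra k A]
    [AddCommGroup V] [Module k V]
    (E H F : A → Module.End k V)
    (hHF : ∀ P Q : A, ⁅H P, F Q⁆ = (-2 : ℤ) • F (P * Q))
    (hEF : ∀ P Q : A, ⁅E P, F Q⁆ = H (P * Q))
    (hFF : ∀ P Q : A, Commute (F P) (F Q))
    (I : Ideal A) (v : V)
    (hEv : ∀ P ∈ I, E P v = 0) (hHv : ∀ P ∈ I, H P v = 0)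
    {ι : Type*} [DecidableEq ι] (Q : ι → A) (P : A) (hP : P ∈ I)
    (s : Finset ι) :
    (E P * s.noncommProd (fun t => F (Q t)) (fun a _ b _ _ => hFF (Q a) (Q b))) v =
      - ∑ i ∈ s, ∑ j ∈ s \ {i},
          (F (P * Q i * Q j) *
            ((s \ {i, j}).noncommProd (fun t => F (Q t))
              (fun a _ b _ _ => hFF (Q a) (Q b)))) v := by
  classical
  induction s using Finset.induction_on with
  | empty => simp [Finset.noncommProd_empty _ (fun a _ b _ _ => hFF (Q a) (Q b)), hEv P hP]
  | @insert a s ha ih =>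
    have hPQa : P * Q a ∈ I := I.mul_mem_right (Q a) hP
    have h1 : E P * F (Q a) = F (Q a) * E P + H (P * Q a) := by
      have h0 := hEF P (Q a)
      rw [Ring.lie_def] at h0
      rw [← h0]; abel
    have expand : E P * ((insert a s).noncommProd (fun t => F (Q t))
        (fun a _ b _ _ => hFF (Q a) (Q b))) =
        F (Q a) * (E P * s.noncommProd (fun t => F (Q t)) (fun a _ b _ _ => hFF (Q a) (Q b)))
          + H (P * Q a) * s.noncommProd (fun t => F (Q t))
              (fun a _ b _ _ => hFF (Q a) (Q b)) := by
      rw [Finset.noncommProd_insert_of_notMem _ _ _ (fun a _ b _ _ => hFF (Q a) (Q b)) ha, ← mul_assoc, h1, add_mul, mul_assoc]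
    have e1 : insert a s \ ({a} : Finset ι) = s := by
      rw [Finset.insert_sdiff_of_mem _ (Finset.mem_singleton_self a),
        Finset.sdiff_singleton_eq_erase, Finset.erase_eq_of_notMem ha]
    have e2 : ∀ i ∈ s, insert a s \ ({i} : Finset ι) = insert a (s \ {i}) := by
      intro i hi
      exact Finset.insert_sdiff_of_notMem _
        (by simp only [Finset.mem_singleton]; rintro rfl; exact ha hi)
    have e3 : ∀ j ∈ s, insert a s \ ({a, j} : Finset ι) = s \ {j} := by
      intro j hj
      ext x
      simp only [Finset.mem_sdiff, Finset.mem_insert, Finset.mem_singleton]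
      constructor
      · rintro ⟨hx1 | hx1, hx2⟩
        · exact absurd (Or.inl hx1) hx2
        · exact ⟨hx1, fun h => hx2 (Or.inr h)⟩
      · rintro ⟨hx1, hx2⟩
        exact ⟨Or.inr hx1, by rintro (rfl | rfl); exacts [ha hx1, hx2 rfl]⟩
    have e4 : ∀ i ∈ s, insert a s \ ({i, a} : Finset ι) = s \ {i} := by
      intro i hi
      ext x
      simp only [Finset.mem_sdiff, Finset.mem_insert, Finset.mem_singleton]
      constructor
      · rintro ⟨hx1 | hx1, hx2⟩
        · exact absurd (Or.inr hx1) hx2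
        · exact ⟨hx1, fun h => hx2 (Or.inl h)⟩
      · rintro ⟨hx1, hx2⟩
        exact ⟨Or.inr hx1, by rintro (rfl | rfl); exacts [hx2 rfl, ha hx1]⟩
    have e5 : ∀ i ∈ s, ∀ j ∈ s \ {i},
        insert a s \ ({i, j} : Finset ι) = insert a (s \ {i, j}) := by
      intro i hi j hj
      refine Finset.insert_sdiff_of_notMem _ ?_
      simp only [Finset.mem_insert, Finset.mem_singleton]
      rintro (rfl | rfl)
      · exact ha hi
      · exact ha (Finset.mem_sdiff.mp hj).1
    have inner : ∀ i ∈ s,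
        (∑ j ∈ insert a s \ {i},
          (F (P * Q i * Q j) *
            ((insert a s \ {i, j}).noncommProd (fun t => F (Q t))
              (fun a _ b _ _ => hFF (Q a) (Q b)))) v) =
        (F (P * Q a * Q i) *
            ((s \ {i}).noncommProd (fun t => F (Q t))
              (fun a _ b _ _ => hFF (Q a) (Q b)))) v +
        ∑ j ∈ s \ {i},
          F (Q a) ((F (P * Q i * Q j) *
            ((s \ {i, j}).noncommProd (fun t => F (Q t))
              (fun a _ b _ _ => hFF (Q a) (Q b)))) v) := by
      intro i hi
      rw [e2 i hi, Finset.sum_insert (fun h => ha (Finset.mem_sdiff.mp h).1),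
        e4 i hi, mul_right_comm P (Q i) (Q a)]
      congr 1
      refine Finset.sum_congr rfl fun j hj => ?_
      rw [e5 i hi j hj, Finset.noncommProd_insert_of_notMem _ _ _ (fun a _ b _ _ => hFF (Q a) (Q b))
        (by simp only [Finset.mem_sdiff]; rintro ⟨h, -⟩; exact ha h),
        ← mul_assoc, (hFF (P * Q i * Q j) (Q a)).eq, mul_assoc, Module.End.mul_apply]
    rw [expand, Finset.sum_insert ha, e1,
      Finset.sum_congr rfl (fun j hj => by rw [e3 j hj]),
      Finset.sum_congr rfl inner,
      LinearMap.add_apply, Module.End.mul_apply, ih,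
      H_prod_aux H F hHF hFF I v hHv Q (P * Q a) hPQa s,
      map_neg, map_sum]
    simp only [map_sum, neg_smul, two_zsmul, Finset.sum_add_distrib, Finset.sum_neg_distrib]
    abel

/-- In the current algebra `sl₂ ⊗ A` (presented by operators `E P = e⊗P`, `H P = h⊗P`,
`F P = f⊗P` on a module `V`, with the current-algebra commutation relations), if `v` is
annihilated by `E P` and `H P` for all `P` in an ideal `I` containing the given element
`P`, then
`(e⊗P)(f⊗Q₁)⋯(f⊗Qₙ) v = - ∑_{i≠j} (f⊗P·Q_i·Q_j) ∏_{k≠i,j} (f⊗Q_k) v`. -/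
theorem stmt_9 {k A V : Type*} [Field k] [CharZero k] [CommRing A] [Algebra k A]
    [AddCommGroup V] [Module k V]
    (E H F : A → Module.End k V)
    (hHE : ∀ P Q : A, ⁅H P, E Q⁆ = (2 : ℤ) • E (P * Q))
    (hHF : ∀ P Q : A, ⁅H P, F Q⁆ = (-2 : ℤ) • F (P * Q))
    (hEF : ∀ P Q : A, ⁅E P, F Q⁆ = H (P * Q))
    (hFF : ∀ P Q : A, Commute (F P) (F Q))
    (I : Ideal A) (v : V)
    (hEv : ∀ P ∈ I, E P v = 0) (hHv : ∀ P ∈ I, H P v = 0)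
    (n : ℕ) (P : A) (hP : P ∈ I) (Q : Fin n → A) :
    (E P * Finset.univ.noncommProd (fun t => F (Q t)) (fun a _ b _ _ => hFF (Q a) (Q b))) v =
      - ∑ i : Fin n, ∑ j ∈ Finset.univ \ {i},
          (F (P * Q i * Q j) *
            ((Finset.univ \ {i, j}).noncommProd (fun t => F (Q t))
              (fun a _ b _ _ => hFF (Q a) (Q b)))) v := by
  exact E_prod_aux E H F hHF hEF hFF I v hEv hHv Q P hP Finset.univ
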